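/- Let $\mathcal{X}$ be a Hilbert space with nested finite-dimensional subspaces $\mathcal{X}_0\subseteq\mathcal{X}_1\subseteq\cdots\subseteq\mathcal{X}_{N+1}$ and a nested orthonormal basis built blockwise as orthonormal complements. Let $M$ be the stiffness matrix of a bilinear form $a$ in this basis with $\|M\|_2 \le C_a$ and $\|M[k]^{-1}\|_2 \le 1/\gamma$ for all principal block-submatrices $M[k]$. If $M$ has a block-$LU$-factorization $M = LU$, and $\lambda(k)$ denotes the coefficient vector of the Galerkin solution $u_k \in \mathcal{X}_k$, then $(U\lambda(N+1))_i = (U\lambda(k))_i$ for all $i \le n_{k+1}$ and $(U\lambda(k))_i = 0$ for $i > n_{k+1}$; consequently $\sum_{k=0}^{N}\|u_{k+1}-u_k\|_{\mathcal{X}}^2 \le \frac{C_a^2}{\gamma^2}\|U\|_2^2 \max_{1\le k\le N+1}\|U^{-1}(:,k)\|_2^2 \cdot \|u - u_0\|_{\mathcal{X}}^2$ where $u$ is the exact solution. -/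

import Mathlib

open Matrix

/-- The spectral (ℓ²-operator) norm of a real matrix. -/
noncomputable def specNorm {m n : ℕ} (M : Matrix (Fin m) (Fin n) ℝ) : ℝ :=
  ‖LinearMap.toContinuousLinearMap (Matrix.toEuclideanLin M)‖

/-- The upper-left `j × j` principal submatrix of `M`. -/
def psub {n : ℕ} (M : Matrix (Fin n) (Fin n) ℝ) (j : ℕ) (h : j ≤ n) :
    Matrix (Fin j) (Fin j) ℝ :=
  Matrix.of fun a b => M (Fin.castLE h a) (Fin.castLE h b)

/-- Block index of an index `i` with respect to the block structure
`nb 0 = 0 < nb 1 < ⋯ < nb m = n`: the largest `j ≤ m` with `nb j ≤ i`. -/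
def blockOf {n : ℕ} (nb : ℕ → ℕ) (m : ℕ) (i : Fin n) : ℕ :=
  Nat.findGreatest (fun j => nb j ≤ i.1) m


lemma euclid_normsq {m : ℕ} (w : Fin m → ℝ) :
    ‖(WithLp.equiv 2 (Fin m → ℝ)).symm w‖ ^ 2 = ∑ i, w i ^ 2 := by
  rw [EuclideanSpace.norm_eq, Real.sq_sqrt (by positivity)]
  simp [sq_abs]

lemma specNorm_nonneg {m n : ℕ} (A : Matrix (Fin m) (Fin n) ℝ) : 0 ≤ specNorm A :=
  norm_nonneg _

lemma mulVec_sq_sum_le {m n : ℕ} (A : Matrix (Fin m) (Fin n) ℝ) (v : Fin n → ℝ) :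
    ∑ i, (A.mulVec v i) ^ 2 ≤ specNorm A ^ 2 * ∑ j, (v j) ^ 2 := by
  have h := (LinearMap.toContinuousLinearMap (Matrix.toEuclideanLin A)).le_opNorm
    ((WithLp.equiv 2 (Fin n → ℝ)).symm v)
  have h2 : (LinearMap.toContinuousLinearMap (Matrix.toEuclideanLin A))
      ((WithLp.equiv 2 (Fin n → ℝ)).symm v)
      = (WithLp.equiv 2 (Fin m → ℝ)).symm (A.mulVec v) := by
    simp [Matrix.toEuclideanLin_apply_piLp_toLp]
  rw [h2] at h
  have := pow_le_pow_left₀ (norm_nonneg _) h 2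
  rwa [mul_pow, euclid_normsq, euclid_normsq] at this

lemma onormsq {E : Type*} [NormedAddCommGroup E] [InnerProductSpace ℝ E]
    {m : ℕ} {b : Fin m → E} (hb : Orthonormal ℝ b) (c : Fin m → ℝ) :
    ‖∑ i, c i • b i‖ ^ 2 = ∑ i, c i ^ 2 := by
  rw [← real_inner_self_eq_norm_sq, hb.inner_sum c c Finset.univ]
  simp [sq]

/-- Lemma `lem:luqoN`: in a nested orthonormal basis, for the
stiffness matrix `M` with block-`LU`-factorization `M = LU`, the vectors `Uλ(k)`
coincide with `Uλ(N+1)` on the first `n_{k+1}` entries and vanish beyond them, and the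
sum of squared increments of the Galerkin solutions is controlled by
`(C_a²/γ²) ‖U‖₂² maxₖ ‖U⁻¹(:,k)‖₂² ‖u - u₀‖²`. -/
theorem stmt_19
    {𝒳 𝒴 : Type*} [NormedAddCommGroup 𝒳] [InnerProductSpace ℝ 𝒳] [CompleteSpace 𝒳]
    [NormedAddCommGroup 𝒴] [InnerProductSpace ℝ 𝒴] [CompleteSpace 𝒴]
    (a : 𝒳 →ₗ[ℝ] 𝒴 →ₗ[ℝ] ℝ) (Ca γ : ℝ) (hCa : 0 < Ca) (hγ : 0 < γ)
    (hbdd : ∀ (x : 𝒳) (y : 𝒴), |a x y| ≤ Ca * ‖x‖ * ‖y‖)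
    (f : 𝒴 →L[ℝ] ℝ)
    (n N : ℕ) (nb : ℕ → ℕ)
    (hnb0 : nb 0 = 0) (hnbend : nb (N + 2) = n)
    (hmono : ∀ k < N + 2, nb k < nb (k + 1))
    (bX : Fin n → 𝒳) (hbX : Orthonormal ℝ bX)
    (bY : Fin n → 𝒴) (hbY : Orthonormal ℝ bY)
    (M : Matrix (Fin n) (Fin n) ℝ)
    (hMdef : ∀ r t : Fin n, M r t = a (bX t) (bY r))
    (hMnorm : specNorm M ≤ Ca)
    (hMinv : ∀ (k : ℕ), k ≤ N + 1 → ∀ h : nb (k + 1) ≤ n,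
      IsUnit (psub M (nb (k + 1)) h) ∧ specNorm (psub M (nb (k + 1)) h)⁻¹ ≤ 1 / γ)
    (L U : Matrix (Fin n) (Fin n) ℝ)
    (hLU : M = L * U) (hUunit : IsUnit U)
    (hLlow : ∀ i j : Fin n, blockOf nb (N + 2) i < blockOf nb (N + 2) j → L i j = 0)
    (hLdiag : ∀ i j : Fin n, blockOf nb (N + 2) i = blockOf nb (N + 2) j →
      L i j = if i = j then 1 else 0)
    (hUup : ∀ i j : Fin n, blockOf nb (N + 2) j < blockOf nb (N + 2) i → U i j = 0)
    (lam : ℕ → Fin n → ℝ)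
    (hsupp : ∀ k ≤ N + 1, ∀ i : Fin n, nb (k + 1) ≤ i.1 → lam k i = 0)
    (hgal : ∀ k ≤ N + 1, ∀ i : Fin n, i.1 < nb (k + 1) →
      M.mulVec (lam k) i = f (bY i))
    (u : 𝒳) (hu : ∀ v : 𝒴, a u v = f v) :
    (∀ k ≤ N + 1,
      (∀ i : Fin n, i.1 < nb (k + 1) → U.mulVec (lam (N + 1)) i = U.mulVec (lam k) i) ∧
      (∀ i : Fin n, nb (k + 1) ≤ i.1 → U.mulVec (lam k) i = 0)) ∧
    ∑ k ∈ Finset.range (N + 1),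
        ‖(∑ i, lam (k + 1) i • bX i) - ∑ i, lam k i • bX i‖ ^ 2 ≤
      Ca ^ 2 / γ ^ 2 * specNorm U ^ 2 *
        ((Finset.Icc 1 (N + 1)).sup' (Finset.nonempty_Icc.mpr (by omega)) fun k =>
          specNorm (Matrix.of fun i j : Fin n =>
            if nb k ≤ j.1 ∧ j.1 < nb (k + 1) then U⁻¹ i j else 0) ^ 2) *
        ‖u - ∑ i, lam 0 i • bX i‖ ^ 2 := by
  subst hnbend
  -- basic monotonicity of nb
  have hnbmono : ∀ s t : ℕ, s ≤ t → t ≤ N + 2 → nb s ≤ nb t := by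
    intro s t hst htN
    induction t with
    | zero =>
      have : s = 0 := by omega
      simp [this]
    | succ t ih =>
      rcases Nat.lt_or_ge s (t + 1) with h | h
      · exact le_trans (ih (by omega) (by omega)) (le_of_lt (hmono t (by omega)))
      · have : s = t + 1 := by omega
        simp [this]
  -- blockOf facts
  have hbspec : ∀ i : Fin (nb (N + 2)), nb (blockOf nb (N + 2) i) ≤ i.1 := by
    intro i
    exact Nat.findGreatest_spec (P := fun j => nb j ≤ i.1) (Nat.zero_le (N + 2))
      (by simpa [hnb0])
  have hble : ∀ i : Fin (nb (N + 2)), blockOf nb (N + 2) i ≤ N + 2 :=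
    fun i => Nat.findGreatest_le _
  have hblock_le : ∀ (k : ℕ), k + 1 ≤ N + 2 → ∀ i : Fin (nb (N + 2)),
      i.1 < nb (k + 1) → blockOf nb (N + 2) i ≤ k := by
    intro k hk i hi
    by_contra h
    push_neg at h
    have := hnbmono (k + 1) (blockOf nb (N + 2) i) h (hble i)
    have := hbspec i
    omega
  have hblock_ge : ∀ (k : ℕ), k + 1 ≤ N + 2 → ∀ i : Fin (nb (N + 2)),
      nb (k + 1) ≤ i.1 → k + 1 ≤ blockOf nb (N + 2) i :=
    fun k hk i hi => Nat.le_findGreatest hk hi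
  have hblockmono : ∀ i j : Fin (nb (N + 2)), i.1 ≤ j.1 →
      blockOf nb (N + 2) i ≤ blockOf nb (N + 2) j :=
    fun i j hij => Nat.findGreatest_mono (fun t ht => le_trans ht hij) le_rfl
  have hLtri : ∀ i j : Fin (nb (N + 2)), i.1 < j.1 → L i j = 0 := by
    intro i j hij
    rcases lt_or_eq_of_le (hblockmono i j hij.le) with h | h
    · exact hLlow i j h
    · rw [hLdiag i j h, if_neg (by intro he; subst he; omega)]
  have hLdiag1 : ∀ i : Fin (nb (N + 2)), L i i = 1 := by
    intro i; rw [hLdiag i i rfl, if_pos rfl]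
  -- Part 1
  have part1 : ∀ k ≤ N + 1,
      (∀ i : Fin (nb (N + 2)), i.1 < nb (k + 1) →
        U.mulVec (lam (N + 1)) i = U.mulVec (lam k) i) ∧
      (∀ i : Fin (nb (N + 2)), nb (k + 1) ≤ i.1 → U.mulVec (lam k) i = 0) := by
    intro k hk
    have hb : ∀ i : Fin (nb (N + 2)), nb (k + 1) ≤ i.1 → U.mulVec (lam k) i = 0 := by
      intro i hi
      show ∑ j, U i j * lam k j = 0
      apply Finset.sum_eq_zero
      intro j _
      by_cases hj : nb (k + 1) ≤ j.1
      · rw [hsupp k hk j hj, mul_zero]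
      · push_neg at hj
        rw [hUup i j (lt_of_le_of_lt (hblock_le k (by omega) j hj)
          (lt_of_lt_of_le (Nat.lt_succ_self k) (hblock_ge k (by omega) i hi))), zero_mul]
    refine ⟨?_, hb⟩
    have ha : ∀ m : ℕ, ∀ i : Fin (nb (N + 2)), i.1 = m → i.1 < nb (k + 1) →
        U.mulVec (lam (N + 1) - lam k) i = 0 := by
      intro m
      induction m using Nat.strong_induction_on with
      | _ m ih =>
        intro i him hi
        have hM1 : M.mulVec (lam (N + 1)) i = f (bY i) :=
          hgal (N + 1) le_rfl i i.isLt
        have hM2 : M.mulVec (lam k) i = f (bY i) := hgal k hk i hi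
        have hMd : M.mulVec (lam (N + 1) - lam k) i = 0 := by
          rw [Matrix.mulVec_sub]
          simp [hM1, hM2]
        rw [hLU, ← Matrix.mulVec_mulVec] at hMd
        have hsum : ∑ j, L i j * (U.mulVec (lam (N + 1) - lam k)) j = 0 := hMd
        rw [Finset.sum_eq_single_of_mem i (Finset.mem_univ i) ?h0] at hsum
        · rw [hLdiag1 i, one_mul] at hsum
          exact hsum
        · intro j _ hji
          rcases Nat.lt_trichotomy j.1 i.1 with h | h | h
          · rw [ih j.1 (him ▸ h) j rfl (by omega), mul_zero]
          · exact absurd (Fin.ext h) hji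
          · rw [hLtri i j h, zero_mul]
    intro i hi
    have := ha i.1 i rfl hi
    rw [Matrix.mulVec_sub] at this
    have := sub_eq_zero.mp this
    exact this
  refine ⟨part1, ?_⟩
  -- Part 2
  set w := U.mulVec (lam (N + 1)) with hw
  set dd := lam (N + 1) - lam 0 with hdd
  set e := u - ∑ i, lam 0 i • bX i with he
  -- step: U⁻¹ and M⁻¹ facts
  have hUdet : IsUnit U.det := (Matrix.isUnit_iff_isUnit_det U).mp hUunit
  have hUinv : ∀ x : Fin (nb (N + 2)) → ℝ, U⁻¹.mulVec (U.mulVec x) = x := by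
    intro x
    rw [Matrix.mulVec_mulVec, Matrix.nonsing_inv_mul U hUdet, Matrix.one_mulVec]
  have hMfull := hMinv (N + 1) le_rfl le_rfl
  have hMunit : IsUnit M := hMfull.1
  have hMinvnorm : specNorm M⁻¹ ≤ 1 / γ := hMfull.2
  have hMdet : IsUnit M.det := (Matrix.isUnit_iff_isUnit_det M).mp hMunit
  -- g = M *ᵥ dd  equals a e (bY i)
  have hg : ∀ i, M.mulVec dd i = a e (bY i) := by
    intro i
    have hsum0 : (a (∑ j, lam 0 j • bX j)) (bY i) = M.mulVec (lam 0) i := by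
      rw [map_sum, LinearMap.sum_apply]
      show ∑ j, (a (lam 0 j • bX j)) (bY i) = ∑ j, M i j * lam 0 j
      refine Finset.sum_congr rfl fun j _ => ?_
      rw [LinearMap.map_smul, LinearMap.smul_apply, smul_eq_mul, hMdef, mul_comm]
    rw [hdd, Matrix.mulVec_sub, he, map_sub]
    simp only [Pi.sub_apply, LinearMap.sub_apply]
    rw [hgal (N + 1) le_rfl i i.isLt, hu (bY i), hsum0]
  -- bound on ∑ g²
  have hgbound : ∑ i, (M.mulVec dd i) ^ 2 ≤ Ca ^ 2 * ‖e‖ ^ 2 := by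
    set g : Fin (nb (N + 2)) → ℝ := M.mulVec dd with hgdef
    set p := ∑ i, g i • bY i with hp
    have hpn : ‖p‖ ^ 2 = ∑ i, g i ^ 2 := onormsq hbY g
    have hap : (a e) p = ∑ i, g i ^ 2 := by
      rw [hp, map_sum]
      apply Finset.sum_congr rfl
      intro i _
      rw [LinearMap.map_smul, smul_eq_mul]
      rw [show (a e) (bY i) = g i from (hg i).symm]
      ring
    have h1 : ∑ i, g i ^ 2 ≤ Ca * ‖e‖ * ‖p‖ := by
      rw [← hap]
      exact le_trans (le_abs_self _) (hbdd e p)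
    nlinarith [sq_nonneg (‖p‖ - Ca * ‖e‖), norm_nonneg p,
      mul_nonneg hCa.le (norm_nonneg e)]
  -- bound on ∑ dd²
  have hddbound : ∑ i, dd i ^ 2 ≤ (1 / γ) ^ 2 * ∑ i, (M.mulVec dd i) ^ 2 := by
    have hdd2 : dd = M⁻¹.mulVec (M.mulVec dd) := by
      rw [Matrix.mulVec_mulVec, Matrix.nonsing_inv_mul M hMdet, Matrix.one_mulVec]
    calc ∑ i, dd i ^ 2 = ∑ i, (M⁻¹.mulVec (M.mulVec dd) i) ^ 2 := by rw [← hdd2]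
      _ ≤ specNorm M⁻¹ ^ 2 * ∑ i, (M.mulVec dd i) ^ 2 := mulVec_sq_sum_le _ _
      _ ≤ (1 / γ) ^ 2 * ∑ i, (M.mulVec dd i) ^ 2 := by
          apply mul_le_mul_of_nonneg_right
          · exact pow_le_pow_left₀ (specNorm_nonneg _) hMinvnorm 2
          · positivity
  -- bound on ∑ (w - W0)²
  have hwbound : ∑ i, (w i - U.mulVec (lam 0) i) ^ 2 ≤ specNorm U ^ 2 * ∑ i, dd i ^ 2 := by
    have : ∀ i, w i - U.mulVec (lam 0) i = U.mulVec dd i := by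
      intro i
      rw [hdd, Matrix.mulVec_sub]
      simp [hw]
    simp_rw [this]
    exact mulVec_sq_sum_le _ _
  -- per-k analysis
  have hnorm : ∀ k, ‖(∑ i, lam (k + 1) i • bX i) - ∑ i, lam k i • bX i‖ ^ 2
      = ∑ i, ((lam (k + 1) - lam k) i) ^ 2 := by
    intro k
    rw [show (∑ i, lam (k + 1) i • bX i) - ∑ i, lam k i • bX i
        = ∑ i, ((lam (k + 1) - lam k) i) • bX i from by
      rw [← Finset.sum_sub_distrib]
      exact Finset.sum_congr rfl fun i _ => by rw [Pi.sub_apply, sub_smul]]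
    exact onormsq hbX _
  -- the masked matrix
  set MaxT := ((Finset.Icc 1 (N + 1)).sup' (Finset.nonempty_Icc.mpr (by omega)) fun k =>
          specNorm (Matrix.of fun i j : Fin (nb (N + 2)) =>
            if nb k ≤ j.1 ∧ j.1 < nb (k + 1) then U⁻¹ i j else 0) ^ 2) with hMaxT
  have hMaxT0 : 0 ≤ MaxT := by
    rw [hMaxT]
    have h1 : (1 : ℕ) ∈ Finset.Icc 1 (N + 1) := Finset.mem_Icc.mpr ⟨le_rfl, by omega⟩
    exact le_trans (sq_nonneg _) (Finset.le_sup'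
      (f := fun t => specNorm (Matrix.of fun i j : Fin (nb (N + 2)) =>
        if nb t ≤ j.1 ∧ j.1 < nb (t + 1) then U⁻¹ i j else 0) ^ 2) h1)
  have perk : ∀ k ∈ Finset.range (N + 1),
      ∑ i, ((lam (k + 1) - lam k) i) ^ 2 ≤
        MaxT * ∑ j, (if nb (k + 1) ≤ j.1 ∧ j.1 < nb (k + 2) then w j ^ 2 else 0) := by
    intro k hkmem
    have hk : k ≤ N := by simpa [Finset.mem_range, Nat.lt_succ_iff] using hkmem
    have hk1 : k + 1 ≤ N + 1 := by omega
    have hdiffk : ∀ i, U.mulVec (lam (k + 1) - lam k) i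
        = (if nb (k + 1) ≤ i.1 ∧ i.1 < nb (k + 2) then w i else 0) := by
      intro i
      rw [Matrix.mulVec_sub, Pi.sub_apply]
      by_cases h1 : i.1 < nb (k + 1)
      · rw [if_neg (by omega)]
        rw [← (part1 k (by omega)).1 i h1,
          ← (part1 (k + 1) hk1).1 i (lt_of_lt_of_le h1 (hnbmono (k + 1) (k + 2) (by omega) (by omega)))]
        exact sub_self _
      · push_neg at h1
        by_cases h2 : i.1 < nb (k + 2)
        · rw [if_pos ⟨h1, h2⟩, (part1 k (by omega)).2 i h1, sub_zero,
            ← (part1 (k + 1) hk1).1 i h2]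
        · push_neg at h2
          rw [if_neg (by omega), (part1 k (by omega)).2 i h1,
            (part1 (k + 1) hk1).2 i h2, sub_zero]
    set Mk := (Matrix.of fun i j : Fin (nb (N + 2)) =>
      if nb (k + 1) ≤ j.1 ∧ j.1 < nb (k + 2) then U⁻¹ i j else 0) with hMk
    have hmask : lam (k + 1) - lam k
        = Mk.mulVec (fun j => if nb (k + 1) ≤ j.1 ∧ j.1 < nb (k + 2) then w j else 0) := by
      rw [← hUinv (lam (k + 1) - lam k)]
      funext i
      show ∑ j, U⁻¹ i j * U.mulVec (lam (k + 1) - lam k) j = _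
      show _ = ∑ j, Mk i j * (if nb (k + 1) ≤ j.1 ∧ j.1 < nb (k + 2) then w j else 0)
      apply Finset.sum_congr rfl
      intro j _
      rw [hdiffk j, hMk]
      by_cases hc : nb (k + 1) ≤ j.1 ∧ j.1 < nb (k + 2)
      · simp [hc]
      · simp [hc]
    have hMkMax : specNorm Mk ^ 2 ≤ MaxT := by
      rw [hMaxT]
      exact Finset.le_sup' (f := fun t => specNorm (Matrix.of fun i j : Fin (nb (N + 2)) =>
        if nb t ≤ j.1 ∧ j.1 < nb (t + 1) then U⁻¹ i j else 0) ^ 2)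
        (by simp [Finset.mem_Icc]; omega)
    calc ∑ i, ((lam (k + 1) - lam k) i) ^ 2
        = ∑ i, (Mk.mulVec (fun j => if nb (k + 1) ≤ j.1 ∧ j.1 < nb (k + 2) then w j else 0) i) ^ 2 := by
          rw [← hmask]
      _ ≤ specNorm Mk ^ 2 * ∑ j, (if nb (k + 1) ≤ j.1 ∧ j.1 < nb (k + 2) then w j else 0) ^ 2 :=
          mulVec_sq_sum_le _ _
      _ = specNorm Mk ^ 2 * ∑ j, (if nb (k + 1) ≤ j.1 ∧ j.1 < nb (k + 2) then w j ^ 2 else 0) := by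
          congr 1
          refine Finset.sum_congr rfl fun j _ => ?_
          by_cases hc : nb (k + 1) ≤ j.1 ∧ j.1 < nb (k + 2) <;> simp [hc]
      _ ≤ MaxT * ∑ j, (if nb (k + 1) ≤ j.1 ∧ j.1 < nb (k + 2) then w j ^ 2 else 0) := by
          apply mul_le_mul_of_nonneg_right hMkMax
          apply Finset.sum_nonneg
          intro j _
          by_cases hc : nb (k + 1) ≤ j.1 ∧ j.1 < nb (k + 2) <;> simp [hc] <;> positivity
  have hblocksum : ∑ k ∈ Finset.range (N + 1),
      ∑ j, (if nb (k + 1) ≤ j.1 ∧ j.1 < nb (k + 2) then w j ^ 2 else 0)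
      ≤ ∑ j, (w j - U.mulVec (lam 0) j) ^ 2 := by
    rw [Finset.sum_comm]
    apply Finset.sum_le_sum
    intro j _
    by_cases hex : ∃ k₀, k₀ ∈ Finset.range (N + 1) ∧ (nb (k₀ + 1) ≤ j.1 ∧ j.1 < nb (k₀ + 2))
    · obtain ⟨k₀, hk₀m, hc₀⟩ := hex
      have hk₀ : k₀ ≤ N := by simpa [Nat.lt_succ_iff] using hk₀m
      rw [Finset.sum_eq_single_of_mem k₀ hk₀m ?_]
      · rw [if_pos hc₀]
        have hW0 : U.mulVec (lam 0) j = 0 := (part1 0 (by omega)).2 j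
          (le_trans (hnbmono 1 (k₀ + 1) (by omega) (by omega)) hc₀.1)
        rw [hW0, sub_zero]
      · intro b hb hbk
        have hbN : b ≤ N := by simpa [Nat.lt_succ_iff] using hb
        rw [if_neg]
        rintro ⟨h1, h2⟩
        rcases Nat.lt_or_ge b k₀ with h | h
        · have := hnbmono (b + 2) (k₀ + 1) (by omega) (by omega); omega
        · have hlt : k₀ < b := by omega
          have := hnbmono (k₀ + 2) (b + 1) (by omega) (by omega); omega
    · push_neg at hex
      rw [Finset.sum_eq_zero (fun b hb => if_neg (fun hc => absurd hc.2 (not_lt.mpr (hex b hb hc.1))))]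
      positivity
  calc ∑ k ∈ Finset.range (N + 1),
        ‖(∑ i, lam (k + 1) i • bX i) - ∑ i, lam k i • bX i‖ ^ 2
      = ∑ k ∈ Finset.range (N + 1), ∑ i, ((lam (k + 1) - lam k) i) ^ 2 :=
        Finset.sum_congr rfl fun k _ => hnorm k
    _ ≤ ∑ k ∈ Finset.range (N + 1),
          MaxT * ∑ j, (if nb (k + 1) ≤ j.1 ∧ j.1 < nb (k + 2) then w j ^ 2 else 0) :=
        Finset.sum_le_sum perk
    _ = MaxT * ∑ k ∈ Finset.range (N + 1),
          ∑ j, (if nb (k + 1) ≤ j.1 ∧ j.1 < nb (k + 2) then w j ^ 2 else 0) := by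
        rw [← Finset.mul_sum]
    _ ≤ MaxT * ∑ j, (w j - U.mulVec (lam 0) j) ^ 2 :=
        mul_le_mul_of_nonneg_left hblocksum hMaxT0
    _ ≤ MaxT * (specNorm U ^ 2 * ∑ i, dd i ^ 2) :=
        mul_le_mul_of_nonneg_left hwbound hMaxT0
    _ ≤ MaxT * (specNorm U ^ 2 * ((1 / γ) ^ 2 * ∑ i, (M.mulVec dd i) ^ 2)) :=
        mul_le_mul_of_nonneg_left
          (mul_le_mul_of_nonneg_left hddbound (by positivity)) hMaxT0
    _ ≤ MaxT * (specNorm U ^ 2 * ((1 / γ) ^ 2 * (Ca ^ 2 * ‖e‖ ^ 2))) :=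
        mul_le_mul_of_nonneg_left
          (mul_le_mul_of_nonneg_left
            (mul_le_mul_of_nonneg_left hgbound (by positivity)) (by positivity)) hMaxT0
    _ = Ca ^ 2 / γ ^ 2 * specNorm U ^ 2 * MaxT * ‖e‖ ^ 2 := by
        field_simp
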